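/- Suppose that for the solution ({x_n},{y_n}) there exist constants M1, M2 > 0 such that M1·y_n ≤ x_n ≤ M2·y_n for all n ∈ ℕ. Suppose A = 0, and that one of the following holds: (i) I_B ∪ I_C ⊆ I_β ∪ I_γ and I_B ≠ ∅; (ii) q = 0, I_D ∪ I_E ⊆ I_δ ∪ I_ε, and I_C ≠ ∅; (iii) p > 0, q > 0, I_D ∪ I_E ⊆ I_δ ∪ I_ε, and I_C ≠ ∅. Suppose further there exists a positive integer η such that for every sequence {c_m}_{m=1}^∞ with c_m ∈ I_β ∪ I_γ for all m, there exist positive integers N1 ≤ N2 ≤ η with Σ_{m=N1}^{N2} c_m ∈ I_B ∪ I_C. Then there exist M > 0 and N ∈ ℕ such that x_n ≤ M and y_n ≤ M for all n > N. -/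

import Mathlib

open Finset

/-- The index set of the coefficient function `f` on `{1, …, k}`:
the set of indices `i ∈ {1, …, k}` with `f i > 0`. -/
noncomputable def indexSet (k : ℕ) (f : ℕ → ℝ) : Finset ℕ :=
  (Finset.Icc 1 k).filter fun i => 0 < f i

/-- The iteration condition: for every sequence `c` (indexed by `1, 2, …`)
taking values in `S`, there exist positive integers `N1 ≤ N2 ≤ η` such that
`∑_{m=N1}^{N2} c m ∈ T`. -/
def iterCond (η : ℕ) (S T : Finset ℕ) : Prop :=
  ∀ c : ℕ → ℕ, (∀ m, 1 ≤ m → c m ∈ S) →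
    ∃ N1 N2 : ℕ, 0 < N1 ∧ N1 ≤ N2 ∧ N2 ≤ η ∧ (∑ m ∈ Finset.Icc N1 N2, c m) ∈ T

set_option maxHeartbeats 1600000 in
theorem stmt_2
    (k : ℕ) (hk : 0 < k)
    (α A p q : ℝ) (β γ B C δ ε D E : ℕ → ℝ)
    (hα : 0 ≤ α) (hA : 0 ≤ A) (hp : 0 ≤ p) (hq : 0 ≤ q)
    (hβ : ∀ i, 0 ≤ β i) (hγ : ∀ i, 0 ≤ γ i) (hB : ∀ j, 0 ≤ B j) (hC : ∀ j, 0 ≤ C j)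
    (hδ : ∀ i, 0 ≤ δ i) (hε : ∀ i, 0 ≤ ε i) (hD : ∀ j, 0 ≤ D j) (hE : ∀ j, 0 ≤ E j)
    (x y : ℕ → ℝ)
    (hxnn : ∀ n, 0 ≤ x n) (hynn : ∀ n, 0 ≤ y n)
    (hxden : ∀ n, k ≤ n →
      0 < A + ∑ j ∈ Icc 1 k, B j * x (n - j) + ∑ j ∈ Icc 1 k, C j * y (n - j))
    (hyden : ∀ n, k ≤ n →
      0 < q + ∑ j ∈ Icc 1 k, D j * x (n - j) + ∑ j ∈ Icc 1 k, E j * y (n - j))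
    (hxrec : ∀ n, k ≤ n → x n =
      (α + ∑ i ∈ Icc 1 k, β i * x (n - i) + ∑ i ∈ Icc 1 k, γ i * y (n - i)) /
      (A + ∑ j ∈ Icc 1 k, B j * x (n - j) + ∑ j ∈ Icc 1 k, C j * y (n - j)))
    (hyrec : ∀ n, k ≤ n → y n =
      (p + ∑ i ∈ Icc 1 k, δ i * x (n - i) + ∑ i ∈ Icc 1 k, ε i * y (n - i)) /
      (q + ∑ j ∈ Icc 1 k, D j * x (n - j) + ∑ j ∈ Icc 1 k, E j * y (n - j)))
    (M1 M2 : ℝ) (hM1 : 0 < M1) (hM2 : 0 < M2)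
    (hcmp : ∀ n, M1 * y n ≤ x n ∧ x n ≤ M2 * y n)
    (hA0 : A = 0)
    (hcase :
      (indexSet k B ∪ indexSet k C ⊆ indexSet k β ∪ indexSet k γ ∧ indexSet k B ≠ ∅) ∨
      (q = 0 ∧ indexSet k D ∪ indexSet k E ⊆ indexSet k δ ∪ indexSet k ε ∧
        indexSet k C ≠ ∅) ∨
      (0 < p ∧ 0 < q ∧ indexSet k D ∪ indexSet k E ⊆ indexSet k δ ∪ indexSet k ε ∧
        indexSet k C ≠ ∅))
    (hη : ∃ η : ℕ, 0 < η ∧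
      iterCond η (indexSet k β ∪ indexSet k γ) (indexSet k B ∪ indexSet k C)) :
    ∃ M : ℝ, 0 < M ∧ ∃ N : ℕ, ∀ n, N < n → x n ≤ M ∧ y n ≤ M := by
  classical
  obtain ⟨η, hηpos, hiter⟩ := hη
  -- comparability in convenient division form
  have hyx : ∀ n, y n ≤ x n / M1 := by
    intro n
    rw [le_div_iff₀ hM1, mul_comm]
    exact (hcmp n).1
  have hxy : ∀ n, x n / M2 ≤ y n := by
    intro n
    rw [div_le_iff₀ hM2, mul_comm]
    exact (hcmp n).2
  -- membership in unions of index sets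
  have hmemU : ∀ (g h : ℕ → ℝ) (i : ℕ),
      i ∈ indexSet k g ∪ indexSet k h ↔ i ∈ Icc 1 k ∧ (0 < g i ∨ 0 < h i) := by
    intro g h i
    simp only [Finset.mem_union, indexSet, Finset.mem_filter]
    tauto
  have hUsub : ∀ (g h : ℕ → ℝ), indexSet k g ∪ indexSet k h ⊆ Icc 1 k := by
    intro g h
    exact Finset.union_subset (Finset.filter_subset _ _) (Finset.filter_subset _ _)
  -- positivity / vanishing of combined coefficients
  have hposM : ∀ (u v M : ℝ), 0 ≤ u → 0 ≤ v → 0 < M → (0 < u ∨ 0 < v) → 0 < u + v / M := by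
    intro u v M hu hv hM h
    rcases h with h | h
    · have : 0 ≤ v / M := div_nonneg hv hM.le
      linarith
    · have : 0 < v / M := div_pos h hM
      linarith
  have hzeroM : ∀ (u v M : ℝ), 0 ≤ u → 0 ≤ v → ¬ 0 < u → ¬ 0 < v → u + v / M = 0 := by
    intro u v M hu hv h1 h2
    have hu0 : u = 0 := le_antisymm (not_lt.1 h1) hu
    have hv0 : v = 0 := le_antisymm (not_lt.1 h2) hv
    rw [hu0, hv0, zero_div, add_zero]
  have hnnM : ∀ (u v M : ℝ), 0 ≤ u → 0 ≤ v → 0 < M → 0 ≤ u + v / M := by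
    intro u v M hu hv hM
    have : 0 ≤ v / M := div_nonneg hv hM.le
    linarith
  -- sum comparison lemmas
  have hsum_y_le : ∀ (c : ℕ → ℝ), (∀ i, 0 ≤ c i) → ∀ t : ℕ,
      ∑ i ∈ Icc 1 k, c i * y (t - i) ≤ ∑ i ∈ Icc 1 k, (c i / M1) * x (t - i) := by
    intro c hc t
    apply Finset.sum_le_sum
    intro i _
    calc c i * y (t - i) ≤ c i * (x (t - i) / M1) :=
          mul_le_mul_of_nonneg_left (hyx (t - i)) (hc i)
      _ = (c i / M1) * x (t - i) := by ring
  have hsum_y_ge : ∀ (c : ℕ → ℝ), (∀ i, 0 ≤ c i) → ∀ t : ℕ,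
      ∑ i ∈ Icc 1 k, (c i / M2) * x (t - i) ≤ ∑ i ∈ Icc 1 k, c i * y (t - i) := by
    intro c hc t
    apply Finset.sum_le_sum
    intro i _
    calc (c i / M2) * x (t - i) = c i * (x (t - i) / M2) := by ring
      _ ≤ c i * y (t - i) := mul_le_mul_of_nonneg_left (hxy (t - i)) (hc i)
  have hsplit : ∀ (c c' : ℕ → ℝ) (t : ℕ),
      ∑ i ∈ Icc 1 k, (c i + c' i) * x (t - i) =
        ∑ i ∈ Icc 1 k, c i * x (t - i) + ∑ i ∈ Icc 1 k, c' i * x (t - i) := by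
    intro c c' t
    rw [← Finset.sum_add_distrib]
    apply Finset.sum_congr rfl
    intro i _
    ring
  -- numerator and denominator bounds
  have hNum_ub : ∀ t : ℕ,
      α + ∑ i ∈ Icc 1 k, β i * x (t - i) + ∑ i ∈ Icc 1 k, γ i * y (t - i) ≤
        α + ∑ i ∈ Icc 1 k, (β i + γ i / M1) * x (t - i) := by
    intro t
    have h1 := hsum_y_le γ hγ t
    have h2 := hsplit β (fun i => γ i / M1) t
    linarith
  have hNum_lb : ∀ t : ℕ,
      α + ∑ i ∈ Icc 1 k, (β i + γ i / M2) * x (t - i) ≤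
        α + ∑ i ∈ Icc 1 k, β i * x (t - i) + ∑ i ∈ Icc 1 k, γ i * y (t - i) := by
    intro t
    have h1 := hsum_y_ge γ hγ t
    have h2 := hsplit β (fun i => γ i / M2) t
    linarith
  have hDen_lb : ∀ t : ℕ,
      ∑ j ∈ Icc 1 k, (B j + C j / M2) * x (t - j) ≤
        ∑ j ∈ Icc 1 k, B j * x (t - j) + ∑ j ∈ Icc 1 k, C j * y (t - j) := by
    intro t
    have h1 := hsum_y_ge C hC t
    have h2 := hsplit B (fun j => C j / M2) t
    linarith
  have hDen_ub : ∀ t : ℕ,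
      ∑ j ∈ Icc 1 k, B j * x (t - j) + ∑ j ∈ Icc 1 k, C j * y (t - j) ≤
        ∑ j ∈ Icc 1 k, (B j + C j / M1) * x (t - j) := by
    intro t
    have h1 := hsum_y_le C hC t
    have h2 := hsplit B (fun j => C j / M1) t
    linarith
  have hNumY_lb : ∀ t : ℕ,
      p + ∑ i ∈ Icc 1 k, (δ i + ε i / M2) * x (t - i) ≤
        p + ∑ i ∈ Icc 1 k, δ i * x (t - i) + ∑ i ∈ Icc 1 k, ε i * y (t - i) := by
    intro t
    have h1 := hsum_y_ge ε hε t
    have h2 := hsplit δ (fun i => ε i / M2) t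
    linarith
  have hDenY_ub : ∀ t : ℕ,
      q + ∑ j ∈ Icc 1 k, D j * x (t - j) + ∑ j ∈ Icc 1 k, E j * y (t - j) ≤
        q + ∑ j ∈ Icc 1 k, (D j + E j / M1) * x (t - j) := by
    intro t
    have h1 := hsum_y_le E hE t
    have h2 := hsplit D (fun j => E j / M1) t
    linarith
  -- positive denominator for the x-equation (with A = 0)
  have hDxpos : ∀ t : ℕ, k ≤ t →
      0 < ∑ j ∈ Icc 1 k, B j * x (t - j) + ∑ j ∈ Icc 1 k, C j * y (t - j) := by
    intro t ht
    have := hxden t ht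
    rw [hA0] at this
    linarith
  have hprod : ∀ t : ℕ, k ≤ t →
      x t * (∑ j ∈ Icc 1 k, B j * x (t - j) + ∑ j ∈ Icc 1 k, C j * y (t - j)) =
        α + ∑ i ∈ Icc 1 k, β i * x (t - i) + ∑ i ∈ Icc 1 k, γ i * y (t - i) := by
    intro t ht
    have hd := hDxpos t ht
    have hrec := hxrec t ht
    rw [hA0, zero_add] at hrec
    rw [hrec, div_mul_cancel₀ _ (ne_of_gt hd)]
  -- generic lower bound for x from coefficient domination
  have hx_lb_of : ∀ c : ℝ, 0 ≤ c →
      (∀ j ∈ Icc 1 k, c * (B j + C j / M1) ≤ β j + γ j / M2) →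
      ∀ n, k ≤ n → c ≤ x n := by
    intro c hc hcoef n hn
    have hd := hDxpos n hn
    have h1 : c * (∑ j ∈ Icc 1 k, B j * x (n - j) + ∑ j ∈ Icc 1 k, C j * y (n - j)) ≤
        c * ∑ j ∈ Icc 1 k, (B j + C j / M1) * x (n - j) :=
      mul_le_mul_of_nonneg_left (hDen_ub n) hc
    have h2 : c * ∑ j ∈ Icc 1 k, (B j + C j / M1) * x (n - j) ≤
        ∑ j ∈ Icc 1 k, (β j + γ j / M2) * x (n - j) := by
      rw [Finset.mul_sum]
      apply Finset.sum_le_sum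
      intro j hj
      calc c * ((B j + C j / M1) * x (n - j)) = (c * (B j + C j / M1)) * x (n - j) := by ring
        _ ≤ (β j + γ j / M2) * x (n - j) :=
            mul_le_mul_of_nonneg_right (hcoef j hj) (hxnn (n - j))
    have h3 := hNum_lb n
    have hrec := hxrec n hn
    rw [hA0, zero_add] at hrec
    rw [hrec, le_div_iff₀ hd]
    linarith
  -- generic lower bound for y from coefficient domination
  have hy_lb_of : ∀ c : ℝ, 0 ≤ c → c * q ≤ p →
      (∀ j ∈ Icc 1 k, c * (D j + E j / M1) ≤ δ j + ε j / M2) →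
      ∀ n, k ≤ n → c ≤ y n := by
    intro c hc hcq hcoef n hn
    have hd := hyden n hn
    have h1 : c * (q + ∑ j ∈ Icc 1 k, D j * x (n - j) + ∑ j ∈ Icc 1 k, E j * y (n - j)) ≤
        c * (q + ∑ j ∈ Icc 1 k, (D j + E j / M1) * x (n - j)) :=
      mul_le_mul_of_nonneg_left (hDenY_ub n) hc
    have h2 : c * ∑ j ∈ Icc 1 k, (D j + E j / M1) * x (n - j) ≤
        ∑ j ∈ Icc 1 k, (δ j + ε j / M2) * x (n - j) := by
      rw [Finset.mul_sum]
      apply Finset.sum_le_sum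
      intro j hj
      calc c * ((D j + E j / M1) * x (n - j)) = (c * (D j + E j / M1)) * x (n - j) := by ring
        _ ≤ (δ j + ε j / M2) * x (n - j) :=
            mul_le_mul_of_nonneg_right (hcoef j hj) (hxnn (n - j))
    have h3 := hNumY_lb n
    have hrec := hyrec n hn
    rw [hrec, le_div_iff₀ hd]
    nlinarith [h1, h2, h3]
  -- uniform positive lower bound for x
  have hmu : ∃ μ : ℝ, 0 < μ ∧ ∀ n, k ≤ n → μ ≤ x n := by
    rcases hcase with ⟨hsub, hBne⟩ | ⟨hq0, hsub, _⟩ | ⟨hppos, hqpos, hsub, _⟩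
    · -- case (i)
      have hne : (indexSet k B ∪ indexSet k C).Nonempty :=
        (Finset.nonempty_iff_ne_empty.2 hBne).mono Finset.subset_union_left
      obtain ⟨j1, hj1, hmin⟩ := Finset.exists_min_image (indexSet k B ∪ indexSet k C)
        (fun j => (β j + γ j / M2) / (B j + C j / M1)) hne
      have hj1b : j1 ∈ indexSet k β ∪ indexSet k γ := hsub hj1
      have hb1 : 0 < β j1 + γ j1 / M2 :=
        hposM _ _ _ (hβ j1) (hγ j1) hM2 ((hmemU β γ j1).1 hj1b).2
      have hd1 : 0 < B j1 + C j1 / M1 :=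
        hposM _ _ _ (hB j1) (hC j1) hM1 ((hmemU B C j1).1 hj1).2
      set c := (β j1 + γ j1 / M2) / (B j1 + C j1 / M1) with hcdef
      have hcpos : 0 < c := by positivity
      refine ⟨c, hcpos, hx_lb_of c hcpos.le ?_⟩
      intro j hj
      by_cases hjd : j ∈ indexSet k B ∪ indexSet k C
      · have hd : 0 < B j + C j / M1 :=
          hposM _ _ _ (hB j) (hC j) hM1 ((hmemU B C j).1 hjd).2
        have hle : c ≤ (β j + γ j / M2) / (B j + C j / M1) := hmin j hjd
        rw [le_div_iff₀ hd] at hle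
        linarith
      · have h1 : ¬ (0 < B j ∨ 0 < C j) := fun h => hjd ((hmemU B C j).2 ⟨hj, h⟩)
        have h0 := hzeroM (B j) (C j) M1 (hB j) (hC j)
          (fun h => h1 (Or.inl h)) (fun h => h1 (Or.inr h))
        rw [h0, mul_zero]
        exact hnnM _ _ _ (hβ j) (hγ j) hM2
    · -- case (ii): q = 0
      have hfne : (indexSet k D ∪ indexSet k E).Nonempty := by
        rw [Finset.nonempty_iff_ne_empty]
        intro hemp
        have hz : ∀ j ∈ Icc 1 k, D j = 0 ∧ E j = 0 := by
          intro j hjI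
          have h1 : ¬ (0 < D j ∨ 0 < E j) := by
            intro h
            have : j ∈ indexSet k D ∪ indexSet k E := (hmemU D E j).2 ⟨hjI, h⟩
            rw [hemp] at this
            exact Finset.notMem_empty j this
          constructor
          · exact le_antisymm (not_lt.1 fun h => h1 (Or.inl h)) (hD j)
          · exact le_antisymm (not_lt.1 fun h => h1 (Or.inr h)) (hE j)
        have hpos := hyden k le_rfl
        have e1 : ∑ j ∈ Icc 1 k, D j * x (k - j) = 0 :=
          Finset.sum_eq_zero fun j hjI => by rw [(hz j hjI).1, zero_mul]
        have e2 : ∑ j ∈ Icc 1 k, E j * y (k - j) = 0 :=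
          Finset.sum_eq_zero fun j hjI => by rw [(hz j hjI).2, zero_mul]
        rw [hq0, e1, e2] at hpos
        linarith
      obtain ⟨j1, hj1, hmin⟩ := Finset.exists_min_image (indexSet k D ∪ indexSet k E)
        (fun j => (δ j + ε j / M2) / (D j + E j / M1)) hfne
      have hj1b : j1 ∈ indexSet k δ ∪ indexSet k ε := hsub hj1
      have hb1 : 0 < δ j1 + ε j1 / M2 :=
        hposM _ _ _ (hδ j1) (hε j1) hM2 ((hmemU δ ε j1).1 hj1b).2
      have hd1 : 0 < D j1 + E j1 / M1 :=
        hposM _ _ _ (hD j1) (hE j1) hM1 ((hmemU D E j1).1 hj1).2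
      set c := (δ j1 + ε j1 / M2) / (D j1 + E j1 / M1) with hcdef
      have hcpos : 0 < c := by positivity
      have hcoef : ∀ j ∈ Icc 1 k, c * (D j + E j / M1) ≤ δ j + ε j / M2 := by
        intro j hj
        by_cases hjd : j ∈ indexSet k D ∪ indexSet k E
        · have hd : 0 < D j + E j / M1 :=
            hposM _ _ _ (hD j) (hE j) hM1 ((hmemU D E j).1 hjd).2
          have hle : c ≤ (δ j + ε j / M2) / (D j + E j / M1) := hmin j hjd
          rw [le_div_iff₀ hd] at hle
          linarith
        · have h1 : ¬ (0 < D j ∨ 0 < E j) := fun h => hjd ((hmemU D E j).2 ⟨hj, h⟩)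
          have h0 := hzeroM (D j) (E j) M1 (hD j) (hE j)
            (fun h => h1 (Or.inl h)) (fun h => h1 (Or.inr h))
          rw [h0, mul_zero]
          exact hnnM _ _ _ (hδ j) (hε j) hM2
      have hcy := hy_lb_of c hcpos.le (by rw [hq0, mul_zero]; exact hp) hcoef
      refine ⟨M1 * c, mul_pos hM1 hcpos, fun n hn => ?_⟩
      calc M1 * c ≤ M1 * y n := mul_le_mul_of_nonneg_left (hcy n hn) hM1.le
        _ ≤ x n := (hcmp n).1
    · -- case (iii): p, q > 0
      have hcoefgen : ∃ c : ℝ, 0 < c ∧ c * q ≤ p ∧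
          ∀ j ∈ Icc 1 k, c * (D j + E j / M1) ≤ δ j + ε j / M2 := by
        by_cases hfne : (indexSet k D ∪ indexSet k E).Nonempty
        · obtain ⟨j1, hj1, hmin⟩ := Finset.exists_min_image (indexSet k D ∪ indexSet k E)
            (fun j => (δ j + ε j / M2) / (D j + E j / M1)) hfne
          have hj1b : j1 ∈ indexSet k δ ∪ indexSet k ε := hsub hj1
          have hb1 : 0 < δ j1 + ε j1 / M2 :=
            hposM _ _ _ (hδ j1) (hε j1) hM2 ((hmemU δ ε j1).1 hj1b).2
          have hd1 : 0 < D j1 + E j1 / M1 :=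
            hposM _ _ _ (hD j1) (hE j1) hM1 ((hmemU D E j1).1 hj1).2
          set c0 := (δ j1 + ε j1 / M2) / (D j1 + E j1 / M1) with hc0def
          have hc0pos : 0 < c0 := by positivity
          refine ⟨min (p / q) c0, lt_min (div_pos hppos hqpos) hc0pos, ?_, ?_⟩
          · have h1 : min (p / q) c0 ≤ p / q := min_le_left _ _
            have h2 := mul_le_mul_of_nonneg_right h1 hq
            rw [div_mul_cancel₀ p (ne_of_gt hqpos)] at h2
            exact h2
          · intro j hj
            by_cases hjd : j ∈ indexSet k D ∪ indexSet k E
            · have hd : 0 < D j + E j / M1 :=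
                hposM _ _ _ (hD j) (hE j) hM1 ((hmemU D E j).1 hjd).2
              have hle : c0 ≤ (δ j + ε j / M2) / (D j + E j / M1) := hmin j hjd
              have hle2 : min (p / q) c0 ≤ (δ j + ε j / M2) / (D j + E j / M1) :=
                le_trans (min_le_right _ _) hle
              rw [le_div_iff₀ hd] at hle2
              linarith
            · have h1 : ¬ (0 < D j ∨ 0 < E j) := fun h => hjd ((hmemU D E j).2 ⟨hj, h⟩)
              have h0 := hzeroM (D j) (E j) M1 (hD j) (hE j)
                (fun h => h1 (Or.inl h)) (fun h => h1 (Or.inr h))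
              rw [h0, mul_zero]
              exact hnnM _ _ _ (hδ j) (hε j) hM2
        · refine ⟨p / q, div_pos hppos hqpos, ?_, ?_⟩
          · rw [div_mul_cancel₀ p (ne_of_gt hqpos)]
          · intro j hj
            have hjd : j ∉ indexSet k D ∪ indexSet k E := by
              intro h
              exact hfne ⟨j, h⟩
            have h1 : ¬ (0 < D j ∨ 0 < E j) := fun h => hjd ((hmemU D E j).2 ⟨hj, h⟩)
            have h0 := hzeroM (D j) (E j) M1 (hD j) (hE j)
              (fun h => h1 (Or.inl h)) (fun h => h1 (Or.inr h))
            rw [h0, mul_zero]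
            exact hnnM _ _ _ (hδ j) (hε j) hM2
      obtain ⟨c, hcpos, hcq, hcoef⟩ := hcoefgen
      have hcy := hy_lb_of c hcpos.le hcq hcoef
      refine ⟨M1 * c, mul_pos hM1 hcpos, fun n hn => ?_⟩
      calc M1 * c ≤ M1 * y n := mul_le_mul_of_nonneg_left (hcy n hn) hM1.le
        _ ≤ x n := (hcmp n).1
  obtain ⟨μ, hμpos, hμ⟩ := hmu
  -- the denominator index set is nonempty
  have hIdne : (indexSet k B ∪ indexSet k C).Nonempty := by
    rcases hcase with ⟨_, h⟩ | ⟨_, _, h⟩ | ⟨_, _, _, h⟩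
    · exact (Finset.nonempty_iff_ne_empty.2 h).mono Finset.subset_union_left
    · exact (Finset.nonempty_iff_ne_empty.2 h).mono Finset.subset_union_right
    · exact (Finset.nonempty_iff_ne_empty.2 h).mono Finset.subset_union_right
  obtain ⟨j0, hj0⟩ := hIdne
  have hj0Icc : j0 ∈ Icc 1 k := hUsub B C hj0
  have hj0k : j0 ≤ k := (Finset.mem_Icc.1 hj0Icc).2
  have hdj0 : 0 < B j0 + C j0 / M2 :=
    hposM _ _ _ (hB j0) (hC j0) hM2 ((hmemU B C j0).1 hj0).2
  -- uniform lower bound for the denominator, for t ≥ 2k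
  have hDen_ge : ∀ t : ℕ, 2 * k ≤ t →
      (B j0 + C j0 / M2) * μ ≤
        ∑ j ∈ Icc 1 k, B j * x (t - j) + ∑ j ∈ Icc 1 k, C j * y (t - j) := by
    intro t ht
    have h1 := hDen_lb t
    have h2 : (B j0 + C j0 / M2) * x (t - j0) ≤
        ∑ j ∈ Icc 1 k, (B j + C j / M2) * x (t - j) := by
      apply Finset.single_le_sum (f := fun j => (B j + C j / M2) * x (t - j)) _ hj0Icc
      intro i _
      exact mul_nonneg (hnnM _ _ _ (hB i) (hC i) hM2) (hxnn (t - i))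
    have h3 : μ ≤ x (t - j0) := hμ (t - j0) (by omega)
    nlinarith [mul_le_mul_of_nonneg_left h3 hdj0.le]
  set ρ : ℝ := (B j0 + C j0 / M2) * μ with hρdef
  have hρpos : 0 < ρ := mul_pos hdj0 hμpos
  -- main case split: numerator index set empty or not
  by_cases hIbne : (indexSet k β ∪ indexSet k γ).Nonempty
  · -- main case
    obtain ⟨i0, hi0⟩ := hIbne
    have hi0Icc : i0 ∈ Icc 1 k := hUsub β γ hi0
    set Bs : ℝ := ∑ i ∈ Icc 1 k, (β i + γ i / M1) with hBsdef
    have hBspos : 0 < Bs := by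
      have h1 : 0 < β i0 + γ i0 / M1 :=
        hposM _ _ _ (hβ i0) (hγ i0) hM1 ((hmemU β γ i0).1 hi0).2
      have h2 : β i0 + γ i0 / M1 ≤ Bs := by
        rw [hBsdef]
        exact Finset.single_le_sum (f := fun i => β i + γ i / M1)
          (fun i _ => hnnM _ _ _ (hβ i) (hγ i) hM1) hi0Icc
      linarith
    -- argmax selector over the numerator index set
    have hpick : ∀ t : ℕ, ∃ i ∈ indexSet k β ∪ indexSet k γ,
        ∀ j ∈ indexSet k β ∪ indexSet k γ, x (t - j) ≤ x (t - i) := fun t =>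
      Finset.exists_max_image _ (fun i => x (t - i)) ⟨i0, hi0⟩
    choose pk hpk1 hpk2 using hpick
    have hpkIcc : ∀ t, pk t ∈ Icc 1 k := fun t => hUsub β γ (hpk1 t)
    have hpk_le : ∀ t, pk t ≤ k := fun t => (Finset.mem_Icc.1 (hpkIcc t)).2
    have hpk_ge : ∀ t, 1 ≤ pk t := fun t => (Finset.mem_Icc.1 (hpkIcc t)).1
    have hsum_pick : ∀ t : ℕ,
        ∑ i ∈ Icc 1 k, (β i + γ i / M1) * x (t - i) ≤ Bs * x (t - pk t) := by
      intro t
      rw [hBsdef, Finset.sum_mul]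
      apply Finset.sum_le_sum
      intro i hi
      by_cases hib : i ∈ indexSet k β ∪ indexSet k γ
      · exact mul_le_mul_of_nonneg_left (hpk2 t i hib) (hnnM _ _ _ (hβ i) (hγ i) hM1)
      · have h1 : ¬ (0 < β i ∨ 0 < γ i) := fun h => hib ((hmemU β γ i).2 ⟨hi, h⟩)
        have h0 := hzeroM (β i) (γ i) M1 (hβ i) (hγ i)
          (fun h => h1 (Or.inl h)) (fun h => h1 (Or.inr h))
        rw [h0, zero_mul, zero_mul]
    -- key step inequalities
    have hstep : ∀ t : ℕ, 2 * k ≤ t →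
        (ρ * x t ≤ α + Bs * x (t - pk t)) ∧
        ∀ j ∈ indexSet k B ∪ indexSet k C,
          x t * ((B j + C j / M2) * x (t - j)) ≤ α + Bs * x (t - pk t) := by
      intro t ht
      have htk : k ≤ t := by omega
      have hpr := hprod t htk
      have hnum : x t * (∑ j ∈ Icc 1 k, B j * x (t - j) + ∑ j ∈ Icc 1 k, C j * y (t - j)) ≤
          α + Bs * x (t - pk t) := by
        rw [hpr]
        linarith [hNum_ub t, hsum_pick t]
      constructor
      · have h1 :
            ρ * x t ≤ (∑ j ∈ Icc 1 k, B j * x (t - j) + ∑ j ∈ Icc 1 k, C j * y (t - j)) * x t :=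
          mul_le_mul_of_nonneg_right (hDen_ge t ht) (hxnn t)
        nlinarith [hnum, h1]
      · intro j hj
        have hjIcc : j ∈ Icc 1 k := hUsub B C hj
        have h2 : (B j + C j / M2) * x (t - j) ≤
            ∑ j' ∈ Icc 1 k, (B j' + C j' / M2) * x (t - j') := by
          apply Finset.single_le_sum (f := fun j' => (B j' + C j' / M2) * x (t - j')) _ hjIcc
          intro i _
          exact mul_nonneg (hnnM _ _ _ (hB i) (hC i) hM2) (hxnn (t - i))
        have h3 := hDen_lb t
        have h4 := mul_le_mul_of_nonneg_left (le_trans h2 h3) (hxnn t)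
        linarith [hnum, h4]
    -- the comparison map and its iterates
    set g : ℝ → ℝ := fun z => (ρ * z - α) / Bs with hgdef
    have hgmono : ∀ u v : ℝ, u ≤ v → g u ≤ g v := by
      intro u v huv
      simp only [hgdef]
      have h := mul_le_mul_of_nonneg_left huv hρpos.le
      exact (div_le_div_iff_of_pos_right hBspos).2 (by linarith)
    have hlin : ∀ m : ℕ, ∃ ε0 C0 : ℝ, 0 < ε0 ∧ 0 ≤ C0 ∧
        ∀ m' ≤ m, ∀ K : ℝ, 0 ≤ K → ε0 * K - C0 ≤ g^[m'] K := by
      intro m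
      induction m with
      | zero =>
        refine ⟨1, 0, one_pos, le_refl 0, ?_⟩
        intro m' hm' K hK
        have hm0 : m' = 0 := Nat.le_zero.1 hm'
        subst hm0
        simp [Function.iterate_zero_apply]
      | succ m ih =>
        obtain ⟨ε0, C0, hε0, hC0, hIH⟩ := ih
        refine ⟨min ε0 (ρ * ε0 / Bs), max C0 ((ρ * C0 + α) / Bs),
          lt_min hε0 (by positivity), le_trans hC0 (le_max_left _ _), ?_⟩
        intro m' hm' K hK
        by_cases hcse : m' ≤ m
        · have h1 := hIH m' hcse K hK
          have h2 : min ε0 (ρ * ε0 / Bs) * K ≤ ε0 * K :=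
            mul_le_mul_of_nonneg_right (min_le_left _ _) hK
          have h3 : C0 ≤ max C0 ((ρ * C0 + α) / Bs) := le_max_left _ _
          linarith
        · have hm'' : m' = m + 1 := by omega
          subst hm''
          rw [Function.iterate_succ_apply']
          have h1 := hIH m le_rfl K hK
          have h2 := hgmono _ _ h1
          have h3 : g (ε0 * K - C0) = (ρ * ε0 / Bs) * K - (ρ * C0 + α) / Bs := by
            simp only [hgdef]
            field_simp
            ring
          have h4 : min ε0 (ρ * ε0 / Bs) * K ≤ (ρ * ε0 / Bs) * K :=
            mul_le_mul_of_nonneg_right (min_le_right _ _) hK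
          have h5 : (ρ * C0 + α) / Bs ≤ max C0 ((ρ * C0 + α) / Bs) := le_max_right _ _
          rw [h3] at h2
          linarith
    obtain ⟨ε0, C0, hε0, hC0, hlin⟩ := hlin η
    -- minimum denominator coefficient over the denominator index set
    obtain ⟨jm, hjm, hjmmin⟩ := Finset.exists_min_image (indexSet k B ∪ indexSet k C)
      (fun j => B j + C j / M2) ⟨j0, hj0⟩
    have hdm : 0 < B jm + C jm / M2 :=
      hposM _ _ _ (hB jm) (hC jm) hM2 ((hmemU B C jm).1 hjm).2
    -- bound on the initial segment
    have hrne : ((Finset.range ((2 * η + 3) * k + 1)).image x).Nonempty :=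
      Finset.Nonempty.image Finset.nonempty_range_add_one x
    set K0 := Finset.max' _ hrne with hK0def
    have hK0 : ∀ i, i ≤ (2 * η + 3) * k → x i ≤ K0 := fun i hi =>
      Finset.le_max' _ _ (Finset.mem_image_of_mem x (Finset.mem_range.2 (by omega)))
    -- choose the threshold
    set T : ℝ := max (max 1 ((α + Bs * C0 / ε0 + 1 + Bs / ε0) / (B jm + C jm / M2)))
      (ε0 * K0 - C0 + 1) with hTdef
    have hT1 : (1 : ℝ) ≤ T := le_trans (le_max_left _ _) (le_max_left _ _)
    have hT0 : (0 : ℝ) ≤ T := by linarith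
    set K := (T + C0) / ε0 with hKdef
    have hTK : ε0 * K - C0 = T := by
      rw [hKdef]
      field_simp
      ring
    have hKnn : (0 : ℝ) ≤ K := by
      rw [hKdef]
      apply div_nonneg (by linarith) hε0.le
    have hK0K : K0 ≤ K := by
      have h1 : ε0 * K0 - C0 + 1 ≤ T := le_max_right _ _
      have h2 : ε0 * K0 ≤ ε0 * K := by linarith
      exact le_of_mul_le_mul_left h2 hε0
    have hquad : α + Bs * K < (B jm + C jm / M2) * (T * T) := by
      have h7 : (α + Bs * C0 / ε0 + 1 + Bs / ε0) / (B jm + C jm / M2) ≤ T :=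
        le_trans (le_max_right _ _) (le_max_left _ _)
      rw [div_le_iff₀ hdm] at h7
      have hKeq : Bs * K = Bs / ε0 * T + Bs * C0 / ε0 := by
        rw [hKdef]
        field_simp
      have h8 := mul_le_mul_of_nonneg_right h7 hT0
      have hA1 : α ≤ α * T := le_mul_of_one_le_right hα hT1
      have hA2 : Bs * C0 / ε0 ≤ (Bs * C0 / ε0) * T :=
        le_mul_of_one_le_right (div_nonneg (mul_nonneg hBspos.le hC0) hε0.le) hT1
      linarith [h8, hA1, hA2, hKeq, hT1]
    -- assume the conclusion fails; extract an index with a huge value of x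
    by_contra hgoal
    push_neg at hgoal
    have hex : ∃ n, K < x n := by
      obtain ⟨n, hn1, hn2⟩ := hgoal (max (K + 1) ((K + 1) / M1))
        (lt_of_lt_of_le (by linarith) (le_max_left _ _)) 0
      by_cases hxn : x n ≤ max (K + 1) ((K + 1) / M1)
      · have hy' := hn2 hxn
        refine ⟨n, ?_⟩
        have h1 : (K + 1) / M1 ≤ max (K + 1) ((K + 1) / M1) := le_max_right _ _
        have h2 : M1 * ((K + 1) / M1) < M1 * y n :=
          mul_lt_mul_of_pos_left (lt_of_le_of_lt h1 hy') hM1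
        have h3 : M1 * ((K + 1) / M1) = K + 1 := by field_simp
        rw [h3] at h2
        linarith [(hcmp n).1]
      · push_neg at hxn
        exact ⟨n, by linarith [le_max_left (K + 1) ((K + 1) / M1)]⟩
    set N := Nat.find hex with hNdef
    have hxN : K < x N := Nat.find_spec hex
    have hminN : ∀ i, i < N → x i ≤ K := fun i hi => not_lt.1 (Nat.find_min hex hi)
    have hNlarge : (2 * η + 3) * k < N := by
      by_contra hcon
      push_neg at hcon
      have := hK0 N hcon
      linarith [hK0K]
    -- the chain of indices
    obtain ⟨ns, hns0, hnss⟩ : ∃ fr : ℕ → ℕ, fr 0 = N ∧ ∀ m, fr (m + 1) = fr m - pk (fr m) :=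
      ⟨fun m => Nat.rec N (fun _ ih => ih - pk ih) m, rfl, fun m => rfl⟩
    have hns_ge : ∀ m : ℕ, N ≤ ns m + m * k := by
      intro m
      induction m with
      | zero => simp [hns0]
      | succ m ih =>
        have h1 := hpk_le (ns m)
        have h2 := hnss m
        rw [Nat.succ_mul]
        generalize hmk : m * k = mk at ih ⊢
        omega
    have hns_lb : ∀ m : ℕ, m ≤ η → 2 * k ≤ ns m := by
      intro m hm
      have h1 := hns_ge m
      have h2 : m * k ≤ η * k := Nat.mul_le_mul_right k hm
      have hNl : η * k + η * k + 3 * k < N := by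
        have h3 : (2 * η + 3) * k = η * k + η * k + 3 * k := by ring
        omega
      generalize hmk : m * k = mk at h1 h2
      generalize hek : η * k = ek at h2 hNl
      omega
    have hns_exact : ∀ m : ℕ, m ≤ η → ns m = ns (m + 1) + pk (ns m) := by
      intro m hm
      have h1 := hns_lb m hm
      have h2 := hpk_le (ns m)
      have h3 := hnss m
      omega
    have hsum_eq : ∀ a b : ℕ, a ≤ b → b ≤ η →
        ns a = ns b + ∑ m ∈ Icc (a + 1) b, pk (ns (m - 1)) := by
      intro a b hab hbη
      revert hbη
      induction b, hab using Nat.le_induction with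
      | base =>
        intro _
        rw [Finset.Icc_eq_empty (by omega), Finset.sum_empty, Nat.add_zero]
      | succ b hab ih =>
        intro hbη
        have ih2 := ih (by omega)
        have hex2 := hns_exact b (by omega)
        rw [Finset.sum_Icc_succ_top (by omega : a + 1 ≤ b + 1)]
        have hb1 : b + 1 - 1 = b := by omega
        rw [hb1]
        omega
    have hns_lt : ∀ m : ℕ, 1 ≤ m → m ≤ η → ns m < N := by
      intro m h1 hm
      have h2 := hsum_eq 0 m (by omega) hm
      rw [hns0, Nat.zero_add] at h2
      have h3 : 1 ≤ ∑ m' ∈ Icc 1 m, pk (ns (m' - 1)) := by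
        calc 1 ≤ pk (ns (1 - 1)) := hpk_ge _
          _ ≤ ∑ m' ∈ Icc 1 m, pk (ns (m' - 1)) :=
            Finset.single_le_sum (f := fun m' => pk (ns (m' - 1)))
              (fun i _ => Nat.zero_le _) (Finset.mem_Icc.2 ⟨le_rfl, h1⟩)
      omega
    have hchainLB : ∀ m : ℕ, m ≤ η → g^[m] K ≤ x (ns m) := by
      intro m
      induction m with
      | zero =>
        intro _
        rw [Function.iterate_zero_apply, hns0]
        exact hxN.le
      | succ m ih =>
        intro hm
        have hm' : m ≤ η := by omega
        have h1 := ih hm'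
        have h2k := hns_lb m hm'
        have hstep1 := (hstep (ns m) h2k).1
        rw [← hnss m] at hstep1
        rw [Function.iterate_succ_apply']
        have h3 := hgmono _ _ h1
        have h4 : g (x (ns m)) ≤ x (ns (m + 1)) := by
          simp only [hgdef]
          rw [div_le_iff₀ hBspos]
          nlinarith [hstep1]
        linarith
    have hchainUB : ∀ m : ℕ, 1 ≤ m → m ≤ η → x (ns m) ≤ K :=
      fun m h1 h2 => hminN _ (hns_lt m h1 h2)
    -- apply the iteration condition
    obtain ⟨N1, N2, hN1pos, hN12, hN2η, hsmem⟩ :=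
      hiter (fun m => pk (ns (m - 1))) (fun m _ => hpk1 _)
    have hkey := hsum_eq (N1 - 1) N2 (by omega) hN2η
    rw [show N1 - 1 + 1 = N1 by omega] at hkey
    set s := ∑ m ∈ Icc N1 N2, pk (ns (m - 1)) with hsdef
    have hN1η : N1 - 1 ≤ η := by omega
    have h2k' := hns_lb (N1 - 1) hN1η
    have happ := (hstep (ns (N1 - 1)) h2k').2 s hsmem
    have hsub1 : ns (N1 - 1) - s = ns N2 := by omega
    have hsub2 : ns (N1 - 1) - pk (ns (N1 - 1)) = ns N1 := by
      have h0 := hnss (N1 - 1)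
      rw [show N1 - 1 + 1 = N1 by omega] at h0
      omega
    rw [hsub1, hsub2] at happ
    -- final comparison
    have hTle1 : T ≤ x (ns (N1 - 1)) := by
      have h1 := hlin (N1 - 1) hN1η K hKnn
      rw [hTK] at h1
      exact le_trans h1 (hchainLB (N1 - 1) hN1η)
    have hTle2 : T ≤ x (ns N2) := by
      have h1 := hlin N2 hN2η K hKnn
      rw [hTK] at h1
      exact le_trans h1 (hchainLB N2 hN2η)
    have hx1K : x (ns N1) ≤ K := hchainUB N1 hN1pos (le_trans hN12 hN2η)
    have hds : B jm + C jm / M2 ≤ B s + C s / M2 := hjmmin s hsmem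
    have hdspos : (0 : ℝ) ≤ B s + C s / M2 := le_trans hdm.le hds
    have hLlow : (B jm + C jm / M2) * (T * T) ≤
        x (ns (N1 - 1)) * ((B s + C s / M2) * x (ns N2)) := by
      have e1 : (B jm + C jm / M2) * T ≤ (B s + C s / M2) * x (ns N2) :=
        mul_le_mul hds hTle2 hT0 hdspos
      have e2 : T * ((B jm + C jm / M2) * T) ≤
          x (ns (N1 - 1)) * ((B s + C s / M2) * x (ns N2)) :=
        mul_le_mul hTle1 e1 (mul_nonneg hdm.le hT0) (hxnn _)
      calc (B jm + C jm / M2) * (T * T) = T * ((B jm + C jm / M2) * T) := by ring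
        _ ≤ _ := e2
    have hRup : α + Bs * x (ns N1) ≤ α + Bs * K := by
      have := mul_le_mul_of_nonneg_left hx1K hBspos.le
      linarith
    linarith [happ, hLlow, hRup, hquad]
  · -- numerator index set empty: direct boundedness
    have hIbe := Finset.not_nonempty_iff_eq_empty.1 hIbne
    have hbz : ∀ i ∈ Icc 1 k, β i = 0 ∧ γ i = 0 := by
      intro i hi
      by_contra hcon
      have h1 : 0 < β i ∨ 0 < γ i := by
        rcases not_and_or.1 hcon with h | h
        · left; exact lt_of_le_of_ne (hβ i) (Ne.symm h)
        · right; exact lt_of_le_of_ne (hγ i) (Ne.symm h)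
      have : i ∈ indexSet k β ∪ indexSet k γ := (hmemU β γ i).2 ⟨hi, h1⟩
      rw [hIbe] at this
      exact absurd this (Finset.notMem_empty i)
    have hxub : ∀ n, 2 * k ≤ n → x n ≤ α / ρ := by
      intro n hn
      have hkn : k ≤ n := by omega
      have hd := hDxpos n hkn
      have hnum : α + ∑ i ∈ Icc 1 k, β i * x (n - i) + ∑ i ∈ Icc 1 k, γ i * y (n - i) ≤ α := by
        have e1 : ∑ i ∈ Icc 1 k, β i * x (n - i) = 0 :=
          Finset.sum_eq_zero fun i hi => by rw [(hbz i hi).1, zero_mul]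
        have e2 : ∑ i ∈ Icc 1 k, γ i * y (n - i) = 0 :=
          Finset.sum_eq_zero fun i hi => by rw [(hbz i hi).2, zero_mul]
        rw [e1, e2]; linarith
      have hrec := hxrec n hkn
      rw [hA0, zero_add] at hrec
      rw [hrec]
      apply div_le_div₀ hα hnum hρpos (hDen_ge n hn)
    refine ⟨α / ρ + α / ρ / M1 + 1, by positivity, 2 * k, ?_⟩
    intro n hn
    have h1 : x n ≤ α / ρ := hxub n (by omega)
    have h2 : y n ≤ α / ρ / M1 :=
      le_trans (hyx n) (div_le_div₀ (by positivity) h1 hM1 le_rfl)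
    constructor
    · have : 0 ≤ α / ρ / M1 := by positivity
      linarith
    · have : 0 ≤ α / ρ := by positivity
      linarith
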